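/- Marshalling correspondence preserves the pointer graph structure exactly: if correspondence is the smallest relation containing (a₀, b₀) and closed under taking equally-indexed components of corresponding equal-length buffers, and it satisfies the axioms that corresponding objects agree on boxedness and buffer length and that corresponding pointers are equal iff their counterparts are equal, then the induced map on the reachable substructures of a₀ is a graph isomorphism onto the reachable substructures of b₀ (bijective on reachable nodes and preserving the points-to edges with labels). -/

import Mathlib

/-- Heap values: unboxed words, or pointers to buffers. -/
inductive Value where
  | unboxed (z : ℤ)
  | ptr (a : ℕ)
deriving DecidableEq

/-- A heap maps each address to the buffer (list of values) it holds. -/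
def Heap : Type := ℕ → List Value

/-- Reachability from a root value: the closure under following pointers to
buffer elements. -/
inductive Reach (heap : Heap) (root : Value) : Value → Prop
  | root : Reach heap root root
  | step {p : ℕ} {v : Value} :
      Reach heap root (.ptr p) → v ∈ heap p → Reach heap root v

/-- `Edge heap v i w`: the buffer pointed by `v` has `w` as its `i`-th
component (a points-to edge labeled `i`). -/
def Edge (heap : Heap) (v : Value) (i : ℕ) (w : Value) : Prop :=
  ∃ p : ℕ, v = .ptr p ∧ (heap p)[i]? = some w

/-- Closure of a relation under taking equally-indexed components of
corresponding buffers. -/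
def ClosedUnderComponents (heap₁ heap₂ : Heap) (S : Value → Value → Prop) : Prop :=
  ∀ p q : ℕ, S (.ptr p) (.ptr q) →
    ∀ (i : ℕ) (h₁ : i < (heap₁ p).length) (h₂ : i < (heap₂ q).length),
      S ((heap₁ p).get ⟨i, h₁⟩) ((heap₂ q).get ⟨i, h₂⟩)

/-- marshalling correspondence preserves the pointer-graph
structure exactly: if `R` is the smallest relation containing `(a₀, b₀)` and
closed under taking equally-indexed components of corresponding buffers, and
it satisfies the marshalling axioms (agreement on boxedness and buffer
lengths, equality of corresponding unboxed payloads, and preservation of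
pointer equality), then `R` induces a graph isomorphism between the
substructures reachable from `a₀` and from `b₀`: it is total, functional,
injective and surjective on reachable nodes, and preserves the labeled
points-to edges in both directions. -/
theorem marshalling_graph_isomorphism
    (heap₁ heap₂ : Heap) (a₀ b₀ : Value) (R : Value → Value → Prop)
    (hR₀ : R a₀ b₀)
    (hclosed : ClosedUnderComponents heap₁ heap₂ R)
    (hsmallest : ∀ S : Value → Value → Prop,
      S a₀ b₀ → ClosedUnderComponents heap₁ heap₂ S → ∀ a b, R a b → S a b)
    (hbox : ∀ a b, R a b → ((∃ z, a = .unboxed z) ↔ (∃ z, b = .unboxed z)))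
    (hlen : ∀ p q : ℕ, R (.ptr p) (.ptr q) → (heap₁ p).length = (heap₂ q).length)
    (hunboxed : ∀ z w : ℤ, R (.unboxed z) (.unboxed w) → z = w)
    (hptr : ∀ p₁ q₁ p₂ q₂ : ℕ, R (.ptr p₁) (.ptr q₁) → R (.ptr p₂) (.ptr q₂) →
      (p₁ = p₂ ↔ q₁ = q₂)) :
    (∀ a, Reach heap₁ a₀ a → ∃ b, R a b ∧ Reach heap₂ b₀ b) ∧
    (∀ b, Reach heap₂ b₀ b → ∃ a, R a b ∧ Reach heap₁ a₀ a) ∧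
    (∀ a b b', Reach heap₁ a₀ a → R a b → R a b' → b = b') ∧
    (∀ a a' b, Reach heap₂ b₀ b → R a b → R a' b → a = a') ∧
    (∀ a b, R a b → ∀ i w, Edge heap₁ a i w → ∃ w', Edge heap₂ b i w' ∧ R w w') ∧
    (∀ a b, R a b → ∀ i w', Edge heap₂ b i w' → ∃ w, Edge heap₁ a i w ∧ R w w') := by
  have hp₁ : ∀ p b, R (.ptr p) b → ∃ q, b = .ptr q := by
    intro p b hab
    cases b with
    | unboxed z =>
      obtain ⟨w, hw⟩ := (hbox _ _ hab).mpr ⟨z, rfl⟩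
      cases hw
    | ptr q => exact ⟨q, rfl⟩
  have hp₂ : ∀ a q, R a (.ptr q) → ∃ p, a = .ptr p := by
    intro a q hab
    cases a with
    | unboxed z =>
      obtain ⟨w, hw⟩ := (hbox _ _ hab).mp ⟨z, rfl⟩
      cases hw
    | ptr p => exact ⟨p, rfl⟩
  refine ⟨?_, ?_, ?_, ?_, ?_, ?_⟩
  · intro a ha
    induction ha with
    | root => exact ⟨b₀, hR₀, .root⟩
    | step hp hv ih =>
      obtain ⟨b, hb, hreach⟩ := ih
      obtain ⟨q, rfl⟩ := hp₁ _ _ hb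
      obtain ⟨⟨i, hi⟩, hget⟩ := List.mem_iff_get.mp hv
      have h₂ : i < (heap₂ q).length := hlen _ _ hb ▸ hi
      refine ⟨(heap₂ q).get ⟨i, h₂⟩, ?_, .step hreach (List.get_mem _ _)⟩
      exact hget ▸ hclosed _ _ hb i hi h₂
  · intro b hb
    induction hb with
    | root => exact ⟨a₀, hR₀, .root⟩
    | step hq hv ih =>
      obtain ⟨a, ha, hreach⟩ := ih
      obtain ⟨p, rfl⟩ := hp₂ _ _ ha
      obtain ⟨⟨i, hi⟩, hget⟩ := List.mem_iff_get.mp hv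
      have h₁ : i < (heap₁ p).length := hlen _ _ ha ▸ hi
      refine ⟨(heap₁ p).get ⟨i, h₁⟩, ?_, .step hreach (List.get_mem _ _)⟩
      exact hget ▸ hclosed _ _ ha i h₁ hi
  · rintro a b b' - hab hab'
    cases a with
    | unboxed z =>
      obtain ⟨w, rfl⟩ := (hbox _ _ hab).mp ⟨z, rfl⟩
      obtain ⟨w', rfl⟩ := (hbox _ _ hab').mp ⟨z, rfl⟩
      rw [← hunboxed z w hab, ← hunboxed z w' hab']
    | ptr p =>
      obtain ⟨q, rfl⟩ := hp₁ _ _ hab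
      obtain ⟨q', rfl⟩ := hp₁ _ _ hab'
      rw [(hptr p q p q' hab hab').mp rfl]
  · rintro a a' b - hab hab'
    cases b with
    | unboxed w =>
      obtain ⟨z, rfl⟩ := (hbox _ _ hab).mpr ⟨w, rfl⟩
      obtain ⟨z', rfl⟩ := (hbox _ _ hab').mpr ⟨w, rfl⟩
      rw [hunboxed z w hab, hunboxed z' w hab']
    | ptr q =>
      obtain ⟨p, rfl⟩ := hp₂ _ _ hab
      obtain ⟨p', rfl⟩ := hp₂ _ _ hab'
      rw [(hptr p q p' q hab hab').mpr rfl]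
  · rintro a b hab i w ⟨p, rfl, hget⟩
    obtain ⟨q, rfl⟩ := hp₁ _ _ hab
    obtain ⟨h₁, hw⟩ := List.getElem?_eq_some_iff.mp hget
    have h₂ : i < (heap₂ q).length := hlen _ _ hab ▸ h₁
    exact ⟨(heap₂ q).get ⟨i, h₂⟩, ⟨q, rfl, List.getElem?_eq_some_iff.mpr ⟨h₂, rfl⟩⟩,
      hw ▸ hclosed p q hab i h₁ h₂⟩
  · rintro a b hab i w' ⟨q, rfl, hget⟩
    obtain ⟨p, rfl⟩ := hp₂ _ _ hab
    obtain ⟨h₂, hw⟩ := List.getElem?_eq_some_iff.mp hget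
    have h₁ : i < (heap₁ p).length := hlen _ _ hab ▸ h₂
    exact ⟨(heap₁ p).get ⟨i, h₁⟩, ⟨p, rfl, List.getElem?_eq_some_iff.mpr ⟨h₁, rfl⟩⟩,
      hw ▸ hclosed p q hab i h₁ h₂⟩
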